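/- Let (F, v) be a discretely valued field with residue field of odd characteristic and uniformizer π. Let a, b ∈ F with v(a) = 0, v(b) = 1, and suppose the residue class of a is not a square in the residue field. Suppose d ∈ F× is a square in the completion F_v and F contains i with i² = −1. Then the equation d = −a x² − b y² + a b z² has no solution with x, y, z ∈ F. In other words, d is not the norm of a pure quaternion in (a,b)_F. -/

import Mathlib

open Multiplicative

private lemma sq_inj {γ δ : WithZero (Multiplicative ℤ)} (h : γ * γ = δ * δ) : γ = δ := by
  rcases eq_or_ne γ 0 with h0 | h0
  · subst h0
    simpa [eq_comm, mul_eq_zero] using h.symm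
  rcases eq_or_ne δ 0 with h1 | h1
  · subst h1; simp [mul_eq_zero, h0] at h
  obtain ⟨g, rfl⟩ := WithZero.ne_zero_iff_exists.mp h0
  obtain ⟨e, rfl⟩ := WithZero.ne_zero_iff_exists.mp h1
  rw [← WithZero.coe_mul, ← WithZero.coe_mul, WithZero.coe_inj] at h
  have h2 := congrArg Multiplicative.toAdd h
  simp only [toAdd_mul] at h2
  rw [WithZero.coe_inj]
  have h3 : Multiplicative.toAdd g = Multiplicative.toAdd e := by omega
  exact Multiplicative.toAdd.injective h3

private lemma parity_ne (γ δ : Multiplicative ℤ) :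
    ((γ : WithZero (Multiplicative ℤ))) * γ ≠
      ((Multiplicative.ofAdd (-1 : ℤ) : Multiplicative ℤ) : WithZero (Multiplicative ℤ))
        * ((δ : WithZero (Multiplicative ℤ)) * δ) := by
  intro h
  rw [← WithZero.coe_mul, ← WithZero.coe_mul, ← WithZero.coe_mul, WithZero.coe_inj] at h
  have h2 := congrArg Multiplicative.toAdd h
  simp only [toAdd_mul, toAdd_ofAdd] at h2
  omega

private lemma max_sq (p q : WithZero (Multiplicative ℤ)) :
    max (p * p) (q * q) = max p q * max p q := by
  rcases le_total p q with h | h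
  · rw [max_eq_right h, max_eq_right (mul_le_mul' h h)]
  · rw [max_eq_left h, max_eq_left (mul_le_mul' h h)]

private lemma exists_close (F : Type*) [Field F] [Valued F (WithZero (Multiplicative ℤ))]
    (s : UniformSpace.Completion F) (σ : WithZero (Multiplicative ℤ)) (hσ : σ ≠ 0)
    (X : F) (hXσ : Valued.v X = σ) :
    ∃ r : F, Valued.v ((r : UniformSpace.Completion F) - s) < σ := by
  have hv : Valued.v ((X : UniformSpace.Completion F)) = σ := by
    rw [Valued.valuedCompletion_apply]; exact hXσ
  have hr0 : (Valued.v : Valuation (UniformSpace.Completion F)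
      (WithZero (Multiplicative ℤ))).restrict (X : UniformSpace.Completion F) ≠ 0 := by
    intro h; apply hσ; rw [← hv]; simpa using h
  have hnb : {y : UniformSpace.Completion F |
      Valued.v (y - s) < σ} ∈ nhds s :=
    Valued.mem_nhds.mpr ⟨Units.mk0 _ hr0, fun y hy => by
      rw [Set.mem_setOf_eq, Units.val_mk0, Valuation.restrict_lt_iff, hv] at hy; exact hy⟩
  obtain ⟨r, hr⟩ := (UniformSpace.Completion.denseRange_coe (α := F)).mem_nhds hnb
  exact ⟨r, hr⟩

/-- Lemma `not-pure-quat-norm`: let `(F, v)` be a discretely valued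
field with residue field of characteristic `≠ 2`, let `a, b ∈ F` with `v(a) = 0`,
`v(b) = 1`, and suppose the residue class of `a` is not a square in the residue field
(expressed as: `a` is not congruent to a square modulo the maximal ideal).  If `F`
contains `i` with `i² = -1` and `d ∈ F^×` becomes a square in the completion `F_v`, then
`d = -a x² - b y² + a b z²` has no solution `x, y, z ∈ F`; that is, `d` is not the
reduced norm of a pure quaternion in `(a,b)_F`. -/
theorem stmt_8 (F : Type*) [Field F] [Valued F (WithZero (Multiplicative ℤ))]
    (hres : ringChar (IsLocalRing.ResidueField
      ((Valued.v : Valuation F (WithZero (Multiplicative ℤ))).valuationSubring)) ≠ 2)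
    (a b : F) (ha : Valued.v a = 1)
    (hb : Valued.v b =
      ((Multiplicative.ofAdd (-1 : ℤ) : Multiplicative ℤ) : WithZero (Multiplicative ℤ)))
    (hansq : ¬ ∃ r : F, Valued.v (a - r * r) < 1)
    (i : F) (hi : i ^ 2 = -1) (d : F) (hd0 : d ≠ 0)
    (hdsq : IsSquare ((d : UniformSpace.Completion F))) :
    ¬ ∃ x y z : F, d = -(a * x ^ 2) - b * y ^ 2 + a * b * z ^ 2 := by
  rintro ⟨x, y, z, hxyz⟩
  obtain ⟨s, hs⟩ := hdsq
  obtain ⟨X, hXdef⟩ : ∃ X : F, X = i * x := ⟨i * x, rfl⟩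
  obtain ⟨Y, hYdef⟩ : ∃ Y : F, Y = i * y := ⟨i * y, rfl⟩
  obtain ⟨C, hCdef⟩ : ∃ C : F, C = Y * Y + a * (z * z) := ⟨_, rfl⟩
  have key : d = a * (X * X) + b * C := by
    rw [hCdef, hXdef, hYdef]
    linear_combination hxyz - (a * x ^ 2 + b * y ^ 2) * hi
  -- valuation of d is a square
  have hσ : Valued.v d = Valued.v s * Valued.v s := by
    rw [← Valued.valuedCompletion_apply d, hs, map_mul]
  have hs0 : Valued.v s ≠ 0 := by
    intro h0
    apply hd0
    have hz : Valued.v d = 0 := by rw [hσ, h0, mul_zero]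
    exact (Valuation.zero_iff _).mp hz
  -- valuation of C when C ≠ 0
  have hCval : C ≠ 0 → Valued.v C = max (Valued.v Y) (Valued.v z) *
      max (Valued.v Y) (Valued.v z) := by
    intro hne
    by_cases hYz : Valued.v Y = Valued.v z
    · by_cases hz0 : z = 0
      · exfalso
        apply hne
        have hY0 : Y = 0 := by
          have hv0 : Valued.v Y = 0 := by rw [hYz, hz0, map_zero]
          exact (Valuation.zero_iff _).mp hv0
        rw [hCdef, hY0, hz0]; ring
      · have h1 : Valued.v (Y / z * (Y / z) + a) = 1 := by
          have htv : Valued.v (Y / z) = 1 := by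
            rw [map_div₀, hYz, div_self]
            simpa [Valuation.zero_iff] using hz0
          refine le_antisymm ?_ ?_
          · calc Valued.v (Y / z * (Y / z) + a)
                ≤ max (Valued.v (Y / z * (Y / z))) (Valued.v a) := Valuation.map_add _ _ _
              _ ≤ 1 := by rw [map_mul, htv, ha]; simp
          · by_contra hlt
            push_neg at hlt
            apply hansq
            refine ⟨i * (Y / z), ?_⟩
            have heq : a - i * (Y / z) * (i * (Y / z)) = Y / z * (Y / z) + a := by
              linear_combination (-(Y / z * (Y / z))) * hi
            rw [heq]
            exact hlt
        have hfac : C = z * z * (Y / z * (Y / z) + a) := by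
          rw [hCdef]; field_simp
        rw [hfac, map_mul, map_mul, h1, mul_one, hYz, max_self]
    · have hdist : Valued.v (Y * Y) ≠ Valued.v (a * (z * z)) := by
        rw [map_mul, map_mul, map_mul, ha, one_mul]
        intro h
        exact hYz (sq_inj h)
      rw [hCdef, Valuation.map_add_of_distinct_val _ hdist, map_mul, map_mul, map_mul, ha,
        one_mul, max_sq]
  -- the two pieces
  have hA : Valued.v (a * (X * X)) = Valued.v X * Valued.v X := by
    rw [map_mul, map_mul, ha, one_mul]
  have hB : Valued.v (b * C) =
      ((Multiplicative.ofAdd (-1 : ℤ) : Multiplicative ℤ) : WithZero (Multiplicative ℤ)) *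
        Valued.v C := by
    rw [map_mul, hb]
  -- final contradiction machine
  have final : X ≠ 0 → Valued.v d = Valued.v X * Valued.v X →
      Valued.v (d - a * (X * X)) < Valued.v X * Valued.v X → False := by
    intro hX0 hvd hclose
    have hvX0 : Valued.v X ≠ 0 := by simpa [Valuation.zero_iff] using hX0
    have hsX : Valued.v s = Valued.v X := by
      apply sq_inj
      rw [← hσ]; exact hvd
    obtain ⟨r, hr⟩ := exists_close F s (Valued.v X) hvX0 X rfl
    have hrX : Valued.v ((r : UniformSpace.Completion F)) ≤ Valued.v X := by
      have hsplit : (r : UniformSpace.Completion F) =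
          ((r : UniformSpace.Completion F) - s) + s := by ring
      rw [hsplit]
      calc Valued.v (((r : UniformSpace.Completion F) - s) + s)
          ≤ max (Valued.v ((r : UniformSpace.Completion F) - s)) (Valued.v s) :=
            Valuation.map_add _ _ _
        _ ≤ Valued.v X := max_le hr.le (le_of_eq hsX)
    have hdr : Valued.v (d - r * r) < Valued.v X * Valued.v X := by
      rw [← Valued.valuedCompletion_apply (d - r * r)]
      have hfac : ((d - r * r : F) : UniformSpace.Completion F) =
          (s - r) * (s + r) := by
        push_cast
        rw [hs]; ring
      rw [hfac, map_mul]
      have h1 : Valued.v ((s : UniformSpace.Completion F) - r) < Valued.v X := by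
        rw [Valuation.map_sub_swap]; exact hr
      have h2 : Valued.v ((s : UniformSpace.Completion F) + r) ≤ Valued.v X :=
        le_trans (Valuation.map_add _ _ _) (max_le (le_of_eq hsX) hrX)
      rw [mul_comm]
      exact mul_lt_mul_of_le_of_lt_of_nonneg_of_pos h2 h1 zero_le' (zero_lt_iff.mpr hvX0)
    have hnum : Valued.v (a * (X * X) - r * r) < Valued.v X * Valued.v X := by
      have hsplit : a * (X * X) - r * r = (a * (X * X) - d) + (d - r * r) := by ring
      rw [hsplit]
      calc Valued.v ((a * (X * X) - d) + (d - r * r))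
          ≤ max (Valued.v (a * (X * X) - d)) (Valued.v (d - r * r)) := Valuation.map_add _ _ _
        _ < Valued.v X * Valued.v X := by
            apply max_lt _ hdr
            rw [Valuation.map_sub_swap]; exact hclose
    apply hansq
    refine ⟨r / X, ?_⟩
    have heq : a * (X * X) - r * r = (a - r / X * (r / X)) * (X * X) := by
      field_simp
    rw [heq, map_mul, map_mul] at hnum
    by_contra hge
    push_neg at hge
    refine absurd hnum (not_lt.mpr ?_)
    calc Valued.v X * Valued.v X = 1 * (Valued.v X * Valued.v X) := (one_mul _).symm
      _ ≤ Valued.v (a - r / X * (r / X)) * (Valued.v X * Valued.v X) :=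
          mul_le_mul_left hge _
  -- case analysis
  by_cases hC0 : C = 0
  · have hd' : d = a * (X * X) := by rw [key, hC0, mul_zero, add_zero]
    have hX0 : X ≠ 0 := by
      intro h
      apply hd0
      rw [hd', h]; ring
    have hvX0 : Valued.v X ≠ 0 := by simpa [Valuation.zero_iff] using hX0
    apply final hX0
    · rw [hd', hA]
    · have hz : d - a * (X * X) = 0 := by rw [hd']; ring
      rw [hz, map_zero]
      exact zero_lt_iff.mpr (mul_ne_zero hvX0 hvX0)
  · have hvC := hCval hC0
    have hM0 : max (Valued.v Y) (Valued.v z) ≠ 0 := by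
      intro h
      have hY0 : Valued.v Y = 0 := le_antisymm (h ▸ le_max_left _ _) zero_le'
      have hz0 : Valued.v z = 0 := le_antisymm (h ▸ le_max_right _ _) zero_le'
      apply hC0
      have hY' : Y = 0 := (Valuation.zero_iff _).mp hY0
      have hz' : z = 0 := (Valuation.zero_iff _).mp hz0
      rw [hCdef, hY', hz']; ring
    obtain ⟨μ, hμ⟩ := WithZero.ne_zero_iff_exists.mp hM0
    obtain ⟨τ, hτ⟩ := WithZero.ne_zero_iff_exists.mp hs0
    have hBv : Valued.v (b * C) =
        ((Multiplicative.ofAdd (-1 : ℤ) : Multiplicative ℤ) : WithZero (Multiplicative ℤ)) *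
          ((μ : WithZero (Multiplicative ℤ)) * μ) := by
      rw [hB, hvC, hμ]
    by_cases hX0 : X = 0
    · have hd' : d = b * C := by rw [key, hX0]; ring
      apply parity_ne τ μ
      rw [hτ, ← hσ, hd', hBv]
    · have hvX0 : Valued.v X ≠ 0 := by simpa [Valuation.zero_iff] using hX0
      obtain ⟨ξ, hξ⟩ := WithZero.ne_zero_iff_exists.mp hvX0
      rcases lt_trichotomy (Valued.v (b * C)) (Valued.v (a * (X * X))) with hlt | heq | hgt
      · have hdist : Valued.v (a * (X * X)) ≠ Valued.v (b * C) := (ne_of_lt hlt).symm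
        have hvd : Valued.v d = Valued.v X * Valued.v X := by
          rw [key, Valuation.map_add_of_distinct_val _ hdist, max_eq_left hlt.le, hA]
        apply final hX0 hvd
        have hdiff : d - a * (X * X) = b * C := by rw [key]; ring
        rw [hdiff, ← hA]
        exact hlt
      · apply parity_ne ξ μ
        rw [hξ, ← hA, ← heq, hBv]
      · have hdist : Valued.v (a * (X * X)) ≠ Valued.v (b * C) := ne_of_lt hgt
        have hvd : Valued.v d = Valued.v (b * C) := by
          rw [key, Valuation.map_add_of_distinct_val _ hdist, max_eq_right hgt.le]
        apply parity_ne τ μ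
        rw [hτ, ← hσ, hvd, hBv]
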